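/- Let K ⊂ R^d be a convex body with 0 in its interior, and let y be in the interior of the polar body K°. Then φ_y(K) = (K° - y)°, where φ_y(x) = x/(1 + ⟨x, y⟩). -/

import Mathlib

open scoped RealInnerProductSpace

/-- The polar dual with the sign convention of the paper:
`K° = {y : ⟨x,y⟩ ≥ -1 for all x ∈ K}`. -/
def polarDual {d : ℕ} (K : Set (EuclideanSpace ℝ (Fin d))) :
    Set (EuclideanSpace ℝ (Fin d)) :=
  {y | ∀ x ∈ K, -1 ≤ ⟪x, y⟫}

/-- Bipolar direction: if `x` pairs `≥ -1` with every element of `K°`, then `x ∈ K`,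
provided `K` is closed, convex and contains `0`. -/
lemma mem_of_forall_polarDual {d : ℕ} (K : Set (EuclideanSpace ℝ (Fin d)))
    (hconv : Convex ℝ K) (hclosed : IsClosed K) (h0 : (0 : EuclideanSpace ℝ (Fin d)) ∈ K)
    (x : EuclideanSpace ℝ (Fin d)) (hx : ∀ z ∈ polarDual K, -1 ≤ ⟪x, z⟫) : x ∈ K := by
  by_contra hxK
  obtain ⟨f, u, hfx, hfb⟩ := geometric_hahn_banach_point_closed hconv hclosed hxK
  have hu : u < 0 := by simpa using hfb 0 h0
  set z' := (InnerProductSpace.toDual ℝ (EuclideanSpace ℝ (Fin d))).symm f with hz'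
  have hz'app : ∀ v, ⟪z', v⟫ = f v := fun v => InnerProductSpace.toDual_symm_apply
  set z := (-u)⁻¹ • z' with hzdef
  have hupos : 0 < -u := by linarith
  have hz : z ∈ polarDual K := by
    intro a ha
    have : ⟪a, z⟫ = (-u)⁻¹ * f a := by
      rw [hzdef, real_inner_smul_right, real_inner_comm, hz'app]
    rw [this]
    have hfa : u ≤ f a := le_of_lt (hfb a ha)
    have := mul_le_mul_of_nonneg_left hfa (le_of_lt (inv_pos.2 hupos))
    calc (-1 : ℝ) = (-u)⁻¹ * u := by field_simp; simp [hu.ne]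
      _ ≤ (-u)⁻¹ * f a := this
  have h1 : -1 ≤ ⟪x, z⟫ := hx z hz
  have h2 : ⟪x, z⟫ = (-u)⁻¹ * f x := by
    rw [hzdef, real_inner_smul_right, real_inner_comm, hz'app]
  have h3 : (-u)⁻¹ * f x < (-u)⁻¹ * u :=
    mul_lt_mul_of_pos_left hfx (inv_pos.2 hupos)
  have h4 : (-u)⁻¹ * u = -1 := by field_simp; simp [hu.ne]
  rw [h2] at h1
  linarith

/-- for a convex body `K` with `0 ∈ int K` and `y ∈ int K°`,
the image of `K` under `φ_y(x) = x/(1+⟨x,y⟩)` equals `(K° - y)°`. -/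
theorem phi_image_eq_polar_of_translate
    (d : ℕ) (K : Set (EuclideanSpace ℝ (Fin d)))
    (hKconv : Convex ℝ K) (hKcomp : IsCompact K)
    (h0 : (0 : EuclideanSpace ℝ (Fin d)) ∈ interior K)
    (y : EuclideanSpace ℝ (Fin d)) (hy : y ∈ interior (polarDual K)) :
    (fun x => (1 + ⟪x, y⟫)⁻¹ • x) '' K
      = polarDual ((fun z => z - y) '' polarDual K) := by
  -- ε-ball around y inside K°
  obtain ⟨ε, hε, hball⟩ := Metric.mem_nhds_iff.1 (mem_interior_iff_mem_nhds.1 hy)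
  -- bound on K
  obtain ⟨R0, hR0⟩ := hKcomp.isBounded.subset_closedBall 0
  set R := max R0 1 with hRdef
  have hR1 : (1 : ℝ) ≤ R := le_max_right _ _
  have hRpos : 0 < R := lt_of_lt_of_le one_pos hR1
  have hKR : ∀ a ∈ K, ‖a‖ ≤ R := fun a ha => le_trans
    (by simpa using Metric.mem_closedBall.1 (hR0 ha)) (le_max_left _ _)
  -- Claim A: 1 + ⟪x,y⟫ > 0 on K
  have claimA : ∀ x ∈ K, 0 < 1 + ⟪x, y⟫ := by
    intro x hx
    rcases eq_or_ne x 0 with rfl | hx0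
    · simp
    · have hnx : 0 < ‖x‖ := norm_pos_iff.2 hx0
      set z := y - (ε / (2 * ‖x‖)) • x with hzdef
      have hzball : z ∈ Metric.ball y ε := by
        rw [Metric.mem_ball, dist_eq_norm, hzdef]
        have : y - (ε / (2 * ‖x‖)) • x - y = -((ε / (2 * ‖x‖)) • x) := by abel
        rw [this, norm_neg, norm_smul, Real.norm_eq_abs,
          abs_of_pos (by positivity : (0:ℝ) < ε / (2 * ‖x‖))]
        rw [div_mul_eq_mul_div, mul_comm]
        rw [div_lt_iff₀ (by positivity)]
        nlinarith
      have hzK : z ∈ polarDual K := hball hzball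
      have := hzK x hx
      rw [hzdef, inner_sub_right, real_inner_smul_right, real_inner_self_eq_norm_sq] at this
      have hsq : ε / (2 * ‖x‖) * ‖x‖ ^ 2 = ε * ‖x‖ / 2 := by
        field_simp
      rw [hsq] at this
      nlinarith
  ext w
  constructor
  · rintro ⟨x, hxK, rfl⟩
    rintro v ⟨z, hzK, rfl⟩
    have hc := claimA x hxK
    have hxz : -1 ≤ ⟪x, z⟫ := hzK x hxK
    have hinv : 0 ≤ (1 + ⟪x, y⟫)⁻¹ := le_of_lt (inv_pos.2 hc)
    have hmul : (1 + ⟪x, y⟫) * (1 + ⟪x, y⟫)⁻¹ = 1 := mul_inv_cancel₀ (ne_of_gt hc)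
    show -1 ≤ ⟪z - y, (1 + ⟪x, y⟫)⁻¹ • x⟫
    rw [real_inner_smul_right, inner_sub_left, real_inner_comm x z, real_inner_comm x y]
    nlinarith [mul_le_mul_of_nonneg_left hxz hinv]
  · intro hw
    rcases eq_or_ne w 0 with rfl | hw0
    · exact ⟨0, interior_subset h0, by simp⟩
    · -- Claim B: 1 - ⟪w,y⟫ ≥ R⁻¹‖w‖ > 0
      have hnw : 0 < ‖w‖ := norm_pos_iff.2 hw0
      set z0 := -((R⁻¹ * ‖w‖⁻¹) • w) with hz0def
      have hz0K : z0 ∈ polarDual K := by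
        intro a ha
        have h1 : ⟪a, z0⟫ = -(R⁻¹ * ‖w‖⁻¹ * ⟪a, w⟫) := by
          rw [hz0def, inner_neg_right, real_inner_smul_right]
        rw [h1]
        have h2 : ⟪a, w⟫ ≤ ‖a‖ * ‖w‖ :=
          le_trans (le_abs_self _) (abs_real_inner_le_norm a w)
        have h3 : ‖a‖ ≤ R := hKR a ha
        have h4 : R⁻¹ * ‖w‖⁻¹ * (‖a‖ * ‖w‖) = ‖a‖ / R := by field_simp
        have hpos : 0 ≤ R⁻¹ * ‖w‖⁻¹ := by positivity
        have h5 := mul_le_mul_of_nonneg_left h2 hpos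
        rw [h4] at h5
        have h6 : ‖a‖ / R ≤ 1 := (div_le_one hRpos).2 h3
        linarith
      have hwz0 : -1 ≤ ⟪z0 - y, w⟫ := hw (z0 - y) ⟨z0, hz0K, rfl⟩
      rw [inner_sub_left, real_inner_comm w y] at hwz0
      have hcomp : ⟪z0, w⟫ = -(R⁻¹ * ‖w‖) := by
        rw [hz0def, inner_neg_left, real_inner_smul_left, real_inner_self_eq_norm_sq]
        have : R⁻¹ * ‖w‖⁻¹ * ‖w‖ ^ 2 = R⁻¹ * ‖w‖ := by
          field_simp
        rw [this]
      rw [hcomp] at hwz0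
      have ht : 0 < 1 - ⟪w, y⟫ := by nlinarith [inv_pos.2 hRpos]
      set t := 1 - ⟪w, y⟫ with htdef
      have htne : t ≠ 0 := ne_of_gt ht
      set x := t⁻¹ • w with hxdef
      have hxK : x ∈ K := by
        apply mem_of_forall_polarDual K hKconv hKcomp.isClosed (interior_subset h0)
        intro z hzK
        have h1 : -1 ≤ ⟪z - y, w⟫ := hw (z - y) ⟨z, hzK, rfl⟩
        rw [inner_sub_left, real_inner_comm w z, real_inner_comm w y] at h1
        have h2 : ⟪x, z⟫ = t⁻¹ * ⟪w, z⟫ := by rw [hxdef, real_inner_smul_left]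
        rw [h2]
        have hwz : -t ≤ ⟪w, z⟫ := by rw [htdef]; linarith
        have := mul_le_mul_of_nonneg_left hwz (le_of_lt (inv_pos.2 ht))
        calc (-1 : ℝ) = t⁻¹ * (-t) := by field_simp
          _ ≤ t⁻¹ * ⟪w, z⟫ := this
      refine ⟨x, hxK, ?_⟩
      have hxy : ⟪x, y⟫ = t⁻¹ * ⟪w, y⟫ := by rw [hxdef, real_inner_smul_left]
      have hcoef : 1 + ⟪x, y⟫ = t⁻¹ := by
        rw [hxy]
        have h : t * (1 + t⁻¹ * ⟪w, y⟫) = 1 := by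
          rw [mul_add, mul_one, ← mul_assoc, mul_inv_cancel₀ htne, one_mul, htdef]; ring
        exact eq_inv_of_mul_eq_one_right h
      show (1 + ⟪x, y⟫)⁻¹ • x = w
      rw [hcoef, hxdef, inv_inv, smul_smul, mul_inv_cancel₀ htne, one_smul]
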